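/- (Invariance of the J-invariants of Picard curves.) For λ₁,λ₂ ∈ ℂ with λ₁,λ₂ ∉ {0,1} and λ₁ ≠ λ₂, define J₁(λ₁,λ₂) := λ₂²(λ₂−1)²/(λ₁²(λ₁−1)²(λ₁−λ₂)²) and J₂(λ₁,λ₂) := λ₁²(λ₁−1)²/(λ₂²(λ₂−1)²(λ₂−λ₁)²). Let T(λ₁,λ₂) := (1−λ₁, 1−λ₂), S₁(λ₁,λ₂) := (λ₁/λ₂, 1/λ₂), and S₂(λ₁,λ₂) := (1/λ₁, λ₂/λ₁). Then J₁(λ₁,λ₂) = J₁(T(λ₁,λ₂)) = J₁(S₁(λ₁,λ₂)) = J₁(S₁T(λ₁,λ₂)) = J₁(TS₁(λ₁,λ₂)) = J₁(S₁TS₁(λ₁,λ₂)), where S₁T(λ₁,λ₂) = ((1−λ₁)/(1−λ₂), 1/(1−λ₂)), TS₁(λ₁,λ₂) = ((λ₂−λ₁)/λ₂, (λ₂−1)/λ₂), S₁TS₁(λ₁,λ₂) = ((λ₂−λ₁)/(λ₂−1), λ₂/(λ₂−1)); and J₂(λ₁,λ₂) = J₂(T(λ₁,λ₂)) = J₂(S₂(λ₁,λ₂))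 = J₂(S₂T(λ₁,λ₂)) = J₂(TS₂(λ₁,λ₂)) = J₂(S₂TS₂(λ₁,λ₂)), where S₂T(λ₁,λ₂) = (1/(1−λ₁), (1−λ₂)/(1−λ₁)), TS₂(λ₁,λ₂) = ((λ₁−1)/λ₁, (λ₁−λ₂)/λ₁), S₂TS₂(λ₁,λ₂) = (λ₁/(λ₁−1), (λ₁−λ₂)/(λ₁−1)). -/

import Mathlib

noncomputable section

/-- The first J-invariant of the Picard curve `y³ = x(x−1)(x−λ₁)(x−λ₂)`. -/
def J1 (l₁ l₂ : ℂ) : ℂ :=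
  l₂ ^ 2 * (l₂ - 1) ^ 2 / (l₁ ^ 2 * (l₁ - 1) ^ 2 * (l₁ - l₂) ^ 2)

/-- The second J-invariant of the Picard curve `y³ = x(x−1)(x−λ₁)(x−λ₂)`. -/
def J2 (l₁ l₂ : ℂ) : ℂ :=
  l₁ ^ 2 * (l₁ - 1) ^ 2 / (l₂ ^ 2 * (l₂ - 1) ^ 2 * (l₂ - l₁) ^ 2)

lemma J2_eq_J1 (a b : ℂ) : J2 a b = J1 b a := rfl

lemma sq3_ne (x y z : ℂ) (hx : x ≠ 0) (hy : y ≠ 0) (hz : z ≠ 0) :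
    x ^ 2 * y ^ 2 * z ^ 2 ≠ 0 :=
  mul_ne_zero (mul_ne_zero (pow_ne_zero _ hx) (pow_ne_zero _ hy)) (pow_ne_zero _ hz)

lemma J1_hom (a b c : ℂ) (ha : a ≠ 0) (hc : c ≠ 0) (hac : a - c ≠ 0) (hab : a - b ≠ 0) :
    J1 (a / c) (b / c) = b ^ 2 * (b - c) ^ 2 * c ^ 2 / (a ^ 2 * (a - c) ^ 2 * (a - b) ^ 2) := by
  rw [J1, div_eq_div_iff]
  · field_simp
  · refine sq3_ne _ _ _ (div_ne_zero ha hc) ?_ ?_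
    · rw [div_sub_one hc]; exact div_ne_zero hac hc
    · rw [div_sub_div_same]; exact div_ne_zero hab hc
  · exact sq3_ne _ _ _ ha hac hab

lemma J1_key (l₁ l₂ : ℂ)
    (h₁0 : l₁ ≠ 0) (h₁1 : l₁ ≠ 1) (h₂0 : l₂ ≠ 0) (h₂1 : l₂ ≠ 1) (h : l₁ ≠ l₂) :
    (J1 l₁ l₂ = J1 (1 - l₁) (1 - l₂) ∧
     J1 l₁ l₂ = J1 (l₁ / l₂) (1 / l₂) ∧
     J1 l₁ l₂ = J1 ((1 - l₁) / (1 - l₂)) (1 / (1 - l₂)) ∧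
     J1 l₁ l₂ = J1 ((l₂ - l₁) / l₂) ((l₂ - 1) / l₂) ∧
     J1 l₁ l₂ = J1 ((l₂ - l₁) / (l₂ - 1)) (l₂ / (l₂ - 1))) := by
  have h₁1' : l₁ - 1 ≠ 0 := sub_ne_zero.2 h₁1
  have h₂1' : l₂ - 1 ≠ 0 := sub_ne_zero.2 h₂1
  have h1₁ : (1 : ℂ) - l₁ ≠ 0 := sub_ne_zero.2 (Ne.symm h₁1)
  have h1₂ : (1 : ℂ) - l₂ ≠ 0 := sub_ne_zero.2 (Ne.symm h₂1)
  have h12 : l₁ - l₂ ≠ 0 := sub_ne_zero.2 h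
  have h21 : l₂ - l₁ ≠ 0 := sub_ne_zero.2 h.symm
  have dL : l₁ ^ 2 * (l₁ - 1) ^ 2 * (l₁ - l₂) ^ 2 ≠ 0 := sq3_ne _ _ _ h₁0 h₁1' h12
  refine ⟨?_, ?_, ?_, ?_, ?_⟩
  · rw [J1, J1, div_eq_div_iff dL]
    · ring
    · refine sq3_ne _ _ _ h1₁ ?_ ?_
      · rw [show (1 : ℂ) - l₁ - 1 = -l₁ by ring]; exact neg_ne_zero.2 h₁0
      · rw [show (1 : ℂ) - l₁ - (1 - l₂) = l₂ - l₁ by ring]; exact h21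
  · rw [J1_hom l₁ 1 l₂ h₁0 h₂0 h12 h₁1', J1, div_eq_div_iff dL (sq3_ne _ _ _ h₁0 h12 h₁1')]
    ring
  · have hac : (1 : ℂ) - l₁ - (1 - l₂) ≠ 0 := by
      rw [show (1 : ℂ) - l₁ - (1 - l₂) = l₂ - l₁ by ring]; exact h21
    have hab : (1 : ℂ) - l₁ - 1 ≠ 0 := by
      rw [show (1 : ℂ) - l₁ - 1 = -l₁ by ring]; exact neg_ne_zero.2 h₁0
    rw [J1_hom (1 - l₁) 1 (1 - l₂) h1₁ h1₂ hac hab, J1,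
      div_eq_div_iff dL (sq3_ne _ _ _ h1₁ hac hab)]
    ring
  · have hac : l₂ - l₁ - l₂ ≠ 0 := by
      rw [show l₂ - l₁ - l₂ = -l₁ by ring]; exact neg_ne_zero.2 h₁0
    have hab : l₂ - l₁ - (l₂ - 1) ≠ 0 := by
      rw [show l₂ - l₁ - (l₂ - 1) = 1 - l₁ by ring]; exact h1₁
    rw [J1_hom (l₂ - l₁) (l₂ - 1) l₂ h21 h₂0 hac hab, J1,
      div_eq_div_iff dL (sq3_ne _ _ _ h21 hac hab)]
    ring
  · have hac : l₂ - l₁ - (l₂ - 1) ≠ 0 := by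
      rw [show l₂ - l₁ - (l₂ - 1) = 1 - l₁ by ring]; exact h1₁
    have hab : l₂ - l₁ - l₂ ≠ 0 := by
      rw [show l₂ - l₁ - l₂ = -l₁ by ring]; exact neg_ne_zero.2 h₁0
    rw [J1_hom (l₂ - l₁) l₂ (l₂ - 1) h21 h₂1' hac hab, J1,
      div_eq_div_iff dL (sq3_ne _ _ _ h21 hac hab)]
    ring

/-- Invariance of the J-invariants `J₁`, `J₂` of Picard curves under
the transformations `T`, `S₁`, `S₂` and their listed composites. -/
theorem statement19 (l₁ l₂ : ℂ)
    (h₁0 : l₁ ≠ 0) (h₁1 : l₁ ≠ 1) (h₂0 : l₂ ≠ 0) (h₂1 : l₂ ≠ 1) (h : l₁ ≠ l₂) :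
    (J1 l₁ l₂ = J1 (1 - l₁) (1 - l₂) ∧
     J1 l₁ l₂ = J1 (l₁ / l₂) (1 / l₂) ∧
     J1 l₁ l₂ = J1 ((1 - l₁) / (1 - l₂)) (1 / (1 - l₂)) ∧
     J1 l₁ l₂ = J1 ((l₂ - l₁) / l₂) ((l₂ - 1) / l₂) ∧
     J1 l₁ l₂ = J1 ((l₂ - l₁) / (l₂ - 1)) (l₂ / (l₂ - 1))) ∧
    (J2 l₁ l₂ = J2 (1 - l₁) (1 - l₂) ∧
     J2 l₁ l₂ = J2 (1 / l₁) (l₂ / l₁) ∧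
     J2 l₁ l₂ = J2 (1 / (1 - l₁)) ((1 - l₂) / (1 - l₁)) ∧
     J2 l₁ l₂ = J2 ((l₁ - 1) / l₁) ((l₁ - l₂) / l₁) ∧
     J2 l₁ l₂ = J2 (l₁ / (l₁ - 1)) ((l₁ - l₂) / (l₁ - 1))) := by
  refine ⟨J1_key l₁ l₂ h₁0 h₁1 h₂0 h₂1 h, ?_⟩
  have k := J1_key l₂ l₁ h₂0 h₂1 h₁0 h₁1 h.symm
  simp only [J2_eq_J1]
  exact k
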